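/- Stabilization of the normalized theta symbol: fix natural numbers α, β, γ and for each N ∈ ℕ define Θ̂_N = ((1 − q^{α+β+γ+3N+1})/(1 − q)) · (q;q)_{α+β+γ+3N} / ((q;q)_{α+N} (q;q)_{β+N} (q;q)_{γ+N}) ∈ ℤ[[q]]. Then Θ̂_N converges coefficientwise to 1/((1−q) · (q;q)_∞²), i.e., for every d ∈ ℕ there exists N₀ such that for all N ≥ N₀ the coefficient of q^d in Θ̂_N equals the coefficient of q^d in (1−q)^{−1} (q;q)_∞^{−2}. -/

import Mathlib

/-!
STATEMENT 4 (Stabilization of the normalized theta symbol).  Work in ℤ[[q]]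
(`PowerSeries ℤ`, with `q := PowerSeries.X`).  `(q;q)_n = ∏_{j=1}^n (1 - q^j)`
is a unit of ℤ[[q]], as are `1 - q` and `(q;q)_∞`; `Ring.inverse` yields the
inverse.  `(q;q)_∞` is the q-adic limit of `(q;q)_n`: its `d`-th coefficient is
the stable value `coeff d ((q;q)_d)`.

The statement: fix `α β γ : ℕ` and for `N : ℕ` put
`Θ̂_N = ((1 − q^{α+β+γ+3N+1})/(1 − q)) · (q;q)_{α+β+γ+3N}
          / ((q;q)_{α+N} (q;q)_{β+N} (q;q)_{γ+N})`.
Then `Θ̂_N → 1/((1−q)·(q;q)_∞²)` coefficientwise: for every `d` there is `N₀`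
such that for all `N ≥ N₀` the coefficients of `q^d` on the two sides agree.
-/

noncomputable section
open PowerSeries

/-- `(q;q)_n = ∏_{j=1}^n (1 - q^j)`. -/
def qPoch (n : ℕ) : PowerSeries ℤ :=
  ∏ j ∈ Finset.range n, (1 - (X : PowerSeries ℤ) ^ (j + 1))

/-- `(q;q)_∞`, the q-adic limit of `(q;q)_n`. -/
def qPochInf : PowerSeries ℤ := PowerSeries.mk fun d => coeff d (qPoch d)


namespace Stmt4Aux

lemma cong_mul {k : ℕ} {a b c e : PowerSeries ℤ}
    (h1 : (X : PowerSeries ℤ) ^ k ∣ a - b) (h2 : (X : PowerSeries ℤ) ^ k ∣ c - e) :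
    (X : PowerSeries ℤ) ^ k ∣ a * c - b * e := by
  have h : a * c - b * e = a * (c - e) + (a - b) * e := by ring
  rw [h]
  exact dvd_add (h2.mul_left a) (h1.mul_right e)

lemma constCoeff_qPoch (n : ℕ) : constantCoeff (qPoch n) = 1 := by
  unfold qPoch
  rw [map_prod]
  apply Finset.prod_eq_one
  intro j _
  simp

lemma isUnit_qPoch (n : ℕ) : IsUnit (qPoch n) := by
  rw [PowerSeries.isUnit_iff_constantCoeff, constCoeff_qPoch]
  exact isUnit_one

lemma isUnit_one_sub_X : IsUnit (1 - (X : PowerSeries ℤ)) := by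
  rw [PowerSeries.isUnit_iff_constantCoeff]
  simp

lemma isUnit_qPochInf : IsUnit qPochInf := by
  rw [PowerSeries.isUnit_iff_constantCoeff]
  have : constantCoeff qPochInf = 1 := by
    have h0 : constantCoeff qPochInf = coeff 0 qPochInf := by
      simp [PowerSeries.coeff_zero_eq_constantCoeff]
    rw [h0]
    simp [qPochInf, qPoch]
  rw [this]; exact isUnit_one

lemma cong_inverse {k : ℕ} {a b : PowerSeries ℤ} (ha : IsUnit a) (hb : IsUnit b)
    (h : (X : PowerSeries ℤ) ^ k ∣ a - b) :
    (X : PowerSeries ℤ) ^ k ∣ Ring.inverse a - Ring.inverse b := by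
  have key : Ring.inverse a - Ring.inverse b = Ring.inverse a * (b - a) * Ring.inverse b := by
    have h1 : Ring.inverse a * a = 1 := Ring.inverse_mul_cancel a ha
    have h2 : b * Ring.inverse b = 1 := Ring.mul_inverse_cancel b hb
    calc Ring.inverse a - Ring.inverse b
        = Ring.inverse a * (b * Ring.inverse b) - (Ring.inverse a * a) * Ring.inverse b := by
          rw [h1, h2]; ring
      _ = Ring.inverse a * (b - a) * Ring.inverse b := by ring
  rw [key]
  have hba : (X : PowerSeries ℤ) ^ k ∣ b - a := by
    have := h.neg_right
    simpa using this
  exact (hba.mul_left _).mul_right _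

lemma qPoch_sub_dvd {m n : ℕ} (h : m ≤ n) :
    (X : PowerSeries ℤ) ^ (m + 1) ∣ qPoch n - qPoch m := by
  induction n with
  | zero =>
    have : m = 0 := Nat.le_zero.mp h
    subst this; simp
  | succ n ih =>
    rcases Nat.lt_or_ge m (n + 1) with hlt | hge
    · have hmn : m ≤ n := Nat.lt_succ_iff.mp hlt
      have hsucc : qPoch (n + 1) = qPoch n * (1 - (X : PowerSeries ℤ) ^ (n + 1)) := by
        unfold qPoch; rw [Finset.prod_range_succ]
      have hsplit : qPoch (n + 1) - qPoch m
          = (qPoch n - qPoch m) - qPoch n * (X : PowerSeries ℤ) ^ (n + 1) := by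
        rw [hsucc]; ring
      rw [hsplit]
      refine dvd_sub (ih hmn) ?_
      exact Dvd.dvd.mul_left (pow_dvd_pow _ (by omega)) _
    · have : m = n + 1 := le_antisymm h hge
      subst this; simp

lemma qPochInf_sub_dvd (n : ℕ) :
    (X : PowerSeries ℤ) ^ (n + 1) ∣ qPochInf - qPoch n := by
  rw [PowerSeries.X_pow_dvd_iff]
  intro j hj
  have hjn : j ≤ n := Nat.lt_succ_iff.mp hj
  rw [map_sub]
  have h1 : coeff j qPochInf = coeff j (qPoch j) := by simp [qPochInf]
  have h2 : coeff j (qPoch n) = coeff j (qPoch j) := by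
    have hd := qPoch_sub_dvd (m := j) (n := n) hjn
    rw [PowerSeries.X_pow_dvd_iff] at hd
    have := hd j (Nat.lt_succ_self j)
    rw [map_sub] at this
    linarith
  rw [h1, h2]; ring

end Stmt4Aux

theorem stmt4 (α β γ : ℕ) (d : ℕ) :
    ∃ N₀ : ℕ, ∀ N : ℕ, N₀ ≤ N →
      coeff d ((1 - (X : PowerSeries ℤ) ^ (α + β + γ + 3 * N + 1)) *
          Ring.inverse (1 - (X : PowerSeries ℤ)) *
          (qPoch (α + β + γ + 3 * N) *
            Ring.inverse (qPoch (α + N) * qPoch (β + N) * qPoch (γ + N))))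
      = coeff d (Ring.inverse ((1 - (X : PowerSeries ℤ)) * qPochInf ^ 2)) := by
  refine ⟨d, fun N hN => ?_⟩
  open Stmt4Aux in
  set k := d + 1 with hk
  -- congruence lemma applications
  have hX : ∀ t : ℕ, d ≤ t → (X : PowerSeries ℤ) ^ k ∣ qPochInf - qPoch t := by
    intro t ht
    exact dvd_trans (pow_dvd_pow _ (by omega)) (qPochInf_sub_dvd t)
  have hA : (X : PowerSeries ℤ) ^ k ∣
      1 - (1 - (X : PowerSeries ℤ) ^ (α + β + γ + 3 * N + 1)) := by
    have : (1 : PowerSeries ℤ) - (1 - (X : PowerSeries ℤ) ^ (α + β + γ + 3 * N + 1))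
        = (X : PowerSeries ℤ) ^ (α + β + γ + 3 * N + 1) := by ring
    rw [this]
    exact pow_dvd_pow _ (by omega)
  have hB : (X : PowerSeries ℤ) ^ k ∣ qPochInf - qPoch (α + β + γ + 3 * N) :=
    hX _ (by omega)
  have hCu : IsUnit (qPoch (α + N) * qPoch (β + N) * qPoch (γ + N)) :=
    ((isUnit_qPoch _).mul (isUnit_qPoch _)).mul (isUnit_qPoch _)
  have hIu : IsUnit (qPochInf ^ 3) := isUnit_qPochInf.pow 3
  have hC : (X : PowerSeries ℤ) ^ k ∣
      qPochInf ^ 3 - qPoch (α + N) * qPoch (β + N) * qPoch (γ + N) := by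
    have h1 := hX (α + N) (by omega)
    have h2 := hX (β + N) (by omega)
    have h3 := hX (γ + N) (by omega)
    have := cong_mul (cong_mul h1 h2) h3
    have heq : qPochInf * qPochInf * qPochInf = qPochInf ^ 3 := by ring
    rwa [heq] at this
  have hCinv : (X : PowerSeries ℤ) ^ k ∣
      Ring.inverse (qPochInf ^ 3) -
        Ring.inverse (qPoch (α + N) * qPoch (β + N) * qPoch (γ + N)) :=
    cong_inverse hIu hCu hC
  -- T is the limit expression
  set T : PowerSeries ℤ :=
    1 * Ring.inverse (1 - (X : PowerSeries ℤ)) *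
      (qPochInf * Ring.inverse (qPochInf ^ 3)) with hT
  have hmain : (X : PowerSeries ℤ) ^ k ∣
      T - (1 - (X : PowerSeries ℤ) ^ (α + β + γ + 3 * N + 1)) *
          Ring.inverse (1 - (X : PowerSeries ℤ)) *
          (qPoch (α + β + γ + 3 * N) *
            Ring.inverse (qPoch (α + N) * qPoch (β + N) * qPoch (γ + N))) := by
    exact cong_mul (cong_mul hA (by simp)) (cong_mul hB hCinv)
  have hTeq : T = Ring.inverse ((1 - (X : PowerSeries ℤ)) * qPochInf ^ 2) := by
    rw [hT, Ring.mul_inverse_rev]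
    have h3 : (qPochInf : PowerSeries ℤ) ^ 3 = qPochInf * qPochInf ^ 2 := by ring
    rw [h3, Ring.mul_inverse_rev]
    have hcan : qPochInf * (Ring.inverse (qPochInf ^ 2) * Ring.inverse qPochInf)
        = Ring.inverse (qPochInf ^ 2) * (qPochInf * Ring.inverse qPochInf) := by ring
    rw [one_mul, hcan, Ring.mul_inverse_cancel _ isUnit_qPochInf, mul_one]
    ring
  rw [hTeq] at hmain
  rw [PowerSeries.X_pow_dvd_iff] at hmain
  have := hmain d (by omega)
  rw [map_sub, sub_eq_zero] at this
  exact this.symm
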